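/- Let f : Bool×Bool×Bool → Bool be an ECA local rule whose global map F : (ℤ → Bool) → (ℤ → Bool) is surjective. Then F preserves the symmetric Bernoulli measure: the pushforward of μ_{1/2} under F equals μ_{1/2}; consequently, for every n ≥ 0 and every binary word b of length m, P_n(b) = μ_{1/2}((F^[n])⁻¹([b])) = 2^{−m}. -/

import Mathlib

open MeasureTheory

/-- The cylinder set generated by the binary word `b` (anchored at `0`). -/
def cylinder (b : List Bool) : Set (ℤ → Bool) :=
  {x | ∀ j : Fin b.length, x (j.val : ℤ) = b.get j}

/-- The global map of the elementary cellular automaton with local rule `f`. -/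
def eca (f : Bool → Bool → Bool → Bool) (x : ℤ → Bool) : ℤ → Bool :=
  fun i => f (x (i - 1)) (x i) (x (i + 1))

/-- `μ` is the Bernoulli (i.i.d. product) measure with parameter `p`: every finite
set of coordinates is independent, each equal to `1 = true` with probability `p`. -/
def IsBernoulli (p : ℝ) (μ : Measure (ℤ → Bool)) : Prop :=
  ∀ (s : Finset ℤ) (f : ℤ → Bool),
    μ {x | ∀ i ∈ s, x i = f i} =
      ∏ i ∈ s, (if f i then ENNReal.ofReal p else ENNReal.ofReal (1 - p))

open Finset

namespace EcaCore

variable (f : Bool → Bool → Bool → Bool)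

def limg2 : Bool → Bool → List Bool → List Bool
  | _, _, [] => []
  | a, b, c :: t => f a b c :: limg2 b c t

def endPair : Bool → Bool → List Bool → Bool × Bool
  | a, b, [] => (a, b)
  | _, b, c :: t => endPair b c t

@[simp] lemma limg2_nil (a b) : limg2 f a b [] = [] := rfl
@[simp] lemma limg2_cons (a b c t) : limg2 f a b (c :: t) = f a b c :: limg2 f b c t := rfl
@[simp] lemma endPair_nil (a b : Bool) : endPair a b [] = (a, b) := rfl
@[simp] lemma endPair_cons (a b c t) : endPair a b (c :: t) = endPair b c t := rfl

@[simp] lemma length_limg2 (a b v) : (limg2 f a b v).length = v.length := by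
  induction v generalizing a b with
  | nil => rfl
  | cons c t ih => simp [ih]

lemma limg2_append (a b u v) :
    limg2 f a b (u ++ v) =
      limg2 f a b u ++ limg2 f (endPair a b u).1 (endPair a b u).2 v := by
  induction u generalizing a b with
  | nil => simp
  | cons c t ih => simp [ih]

lemma endPair_append (a b : Bool) (u v : List Bool) :
    endPair a b (u ++ v) = endPair (endPair a b u).1 (endPair a b u).2 v := by
  induction u generalizing a b with
  | nil => simp
  | cons c t ih => simp [ih]

lemma limg2_getD (a b : Bool) (v : List Bool) (j : ℕ) (hj : j < v.length) :
    (limg2 f a b v).getD j false =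
      f ((a :: b :: v).getD j false) ((a :: b :: v).getD (j+1) false)
        ((a :: b :: v).getD (j+2) false) := by
  induction v generalizing a b j with
  | nil => simp at hj
  | cons c t ih =>
    cases j with
    | zero => simp
    | succ j =>
      simp only [limg2_cons, List.getD_cons_succ]
      exact ih b c j (by simpa using hj)

def allWords : ℕ → Finset (List Bool)
  | 0 => {[]}
  | n+1 => ((Finset.univ : Finset Bool) ×ˢ allWords n).image fun p => p.1 :: p.2

lemma mem_allWords {n : ℕ} {u : List Bool} : u ∈ allWords n ↔ u.length = n := by
  induction n generalizing u with
  | zero => simp [allWords, List.length_eq_zero_iff]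
  | succ n ih =>
    simp only [allWords, mem_image, mem_product, mem_univ, true_and]
    constructor
    · rintro ⟨⟨a, w⟩, hw, rfl⟩; simp [ih.mp hw]
    · intro h
      cases u with
      | nil => simp at h
      | cons a w => exact ⟨⟨a, w⟩, ih.mpr (by simpa using h), rfl⟩

lemma card_allWords (n : ℕ) : (allWords n).card = 2 ^ n := by
  induction n with
  | zero => rfl
  | succ n ih =>
    rw [allWords, Finset.card_image_of_injective _ (by rintro ⟨a,w⟩ ⟨a',w'⟩ h; simpa using h)]
    simp [ih, pow_succ, mul_comm]

def Pre (u : List Bool) : Finset ((Bool × Bool) × List Bool) :=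
  ((Finset.univ : Finset (Bool × Bool)) ×ˢ allWords u.length).filter
    fun p => limg2 f p.1.1 p.1.2 p.2 = u

lemma mem_Pre {u : List Bool} {p : (Bool × Bool) × List Bool} :
    p ∈ Pre f u ↔ limg2 f p.1.1 p.1.2 p.2 = u := by
  constructor
  · intro h; exact (mem_filter.mp h).2
  · intro h
    refine mem_filter.mpr ⟨mem_product.mpr ⟨mem_univ _, ?_⟩, h⟩
    rw [mem_allWords]
    have := length_limg2 f p.1.1 p.1.2 p.2
    rw [h] at this; omega

def N (u : List Bool) : ℕ := (Pre f u).card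

lemma N_nil : N f [] = 4 := by
  have : Pre f [] = (Finset.univ : Finset (Bool × Bool)) ×ˢ allWords 0 := by
    apply Finset.filter_true_of_mem
    intro p hp
    have : p.2 ∈ allWords 0 := (mem_product.mp hp).2
    rw [mem_allWords, List.length_eq_zero_iff] at this
    rw [this]; rfl
  rw [N, this]
  simp [allWords]

lemma sum_N (m : ℕ) : ∑ u ∈ allWords m, N f u = 2 ^ (m + 2) := by
  have h := Finset.card_eq_sum_card_fiberwise
    (f := fun p : (Bool × Bool) × List Bool => limg2 f p.1.1 p.1.2 p.2)
    (s := (Finset.univ : Finset (Bool × Bool)) ×ˢ allWords m) (t := allWords m) ?_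
  · have hcard : ((Finset.univ : Finset (Bool × Bool)) ×ˢ allWords m).card = 2 ^ (m + 2) := by
      simp [card_allWords]; ring
    rw [hcard] at h
    rw [h]
    refine Finset.sum_congr rfl fun u hu => ?_
    rw [mem_allWords] at hu
    rw [N, Pre, hu]
  · intro p hp
    have : p.2 ∈ allWords m := (mem_product.mp hp).2
    rw [mem_allWords] at this; rw [Finset.mem_coe, mem_allWords]
    simp [this]


lemma ext_getD {l l' : List Bool} (h : l.length = l'.length)
    (hg : ∀ j < l.length, l.getD j false = l'.getD j false) : l = l' := by
  apply List.ext_getElem h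
  intro j h1 h2
  rw [← List.getD_eq_getElem l false h1, ← List.getD_eq_getElem l' false h2]
  exact hg j h1

lemma dropLast_getLastD {l : List Bool} (h : l ≠ []) :
    l.dropLast ++ [l.getLastD false] = l := by
  induction l using List.reverseRecOn with
  | nil => simp at h
  | append_singleton u a ih => simp

lemma mem_union_Pre {u : List Bool} {p : (Bool × Bool) × List Bool} {t : Bool} :
    limg2 f p.1.1 p.1.2 p.2 = u ++ [t] → p ∈ Pre f (u ++ [false]) ∪ Pre f (u ++ [true]) := by
  intro h
  rw [Finset.mem_union, mem_Pre, mem_Pre, h]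
  cases t
  · exact Or.inl rfl
  · exact Or.inr rfl

lemma N_cons_sum (u : List Bool) : N f (false :: u) + N f (true :: u) = 2 * N f u := by
  classical
  have hdisj : Disjoint (Pre f (false :: u)) (Pre f (true :: u)) := by
    rw [Finset.disjoint_left]
    intro p hp hq
    rw [mem_Pre] at hp hq
    rw [hp] at hq
    simpa using hq
  have hcard : (Pre f (false :: u) ∪ Pre f (true :: u)).card = N f (false :: u) + N f (true :: u) :=
    Finset.card_union_of_disjoint hdisj
  have hbij : ((Finset.univ : Finset Bool) ×ˢ Pre f u).card
      = (Pre f (false :: u) ∪ Pre f (true :: u)).card := by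
    apply Finset.card_nbij' (i := fun q => ((q.1, q.2.1.1), q.2.1.2 :: q.2.2))
      (j := fun p => (p.1.1, ((p.1.2, p.2.head!), p.2.tail)))
    · intro q hq
      simp only [Finset.mem_coe, Finset.mem_product, Finset.mem_univ, true_and] at hq
      rw [mem_Pre] at hq
      have h2 : limg2 f q.1 q.2.1.1 (q.2.1.2 :: q.2.2) = f q.1 q.2.1.1 q.2.1.2 :: u := by
        simp [hq]
      rw [Finset.mem_coe, Finset.mem_union, mem_Pre, mem_Pre]
      rcases Bool.dichotomy (f q.1 q.2.1.1 q.2.1.2) with hb | hb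
      · exact Or.inl (by rw [hb] at h2; exact h2)
      · exact Or.inr (by rw [hb] at h2; exact h2)
    · intro p hp
      have hp' : limg2 f p.1.1 p.1.2 p.2 = false :: u ∨ limg2 f p.1.1 p.1.2 p.2 = true :: u := by
        rcases Finset.mem_union.mp hp with h | h <;> rw [mem_Pre] at h <;> [exact Or.inl h; exact Or.inr h]
      have hlen : p.2.length = u.length + 1 := by
        have := length_limg2 f p.1.1 p.1.2 p.2
        rcases hp' with h | h <;> rw [h] at this <;> simpa using this.symm
      obtain ⟨c, t, hct⟩ : ∃ c t, p.2 = c :: t := by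
        cases hpp : p.2 with
        | nil => rw [hpp] at hlen; simp at hlen
        | cons c t => exact ⟨c, t, rfl⟩
      simp only [Finset.mem_coe, Finset.mem_product, Finset.mem_univ, true_and]
      rw [mem_Pre]
      rcases hp' with h | h <;>
        · rw [hct] at h
          simp only [limg2_cons, List.cons.injEq] at h
          simp [hct, h.2]
    · intro q hq
      simp
    · intro p hp
      have hp' : limg2 f p.1.1 p.1.2 p.2 = false :: u ∨ limg2 f p.1.1 p.1.2 p.2 = true :: u := by
        rcases Finset.mem_union.mp hp with h | h <;> rw [mem_Pre] at h <;> [exact Or.inl h; exact Or.inr h]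
      have hlen : p.2.length = u.length + 1 := by
        have := length_limg2 f p.1.1 p.1.2 p.2
        rcases hp' with h | h <;> rw [h] at this <;> simpa using this.symm
      obtain ⟨c, t, hct⟩ : ∃ c t, p.2 = c :: t := by
        cases hpp : p.2 with
        | nil => rw [hpp] at hlen; simp at hlen
        | cons c t => exact ⟨c, t, rfl⟩
      obtain ⟨⟨a,b⟩, v⟩ := p
      simp only at hct
      simp [hct]
  rw [← hcard, ← hbij]
  simp [N, two_mul]

lemma N_concat_sum (u : List Bool) : N f (u ++ [false]) + N f (u ++ [true]) = 2 * N f u := by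
  classical
  have hdisj : Disjoint (Pre f (u ++ [false])) (Pre f (u ++ [true])) := by
    rw [Finset.disjoint_left]
    intro p hp hq
    rw [mem_Pre] at hp hq
    rw [hp] at hq
    simpa using hq
  have hcard : (Pre f (u ++ [false]) ∪ Pre f (u ++ [true])).card
      = N f (u ++ [false]) + N f (u ++ [true]) :=
    Finset.card_union_of_disjoint hdisj
  have hbij : (Pre f u ×ˢ (Finset.univ : Finset Bool)).card
      = (Pre f (u ++ [false]) ∪ Pre f (u ++ [true])).card := by
    apply Finset.card_nbij' (i := fun q => (q.1.1, q.1.2 ++ [q.2]))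
      (j := fun p => ((p.1, p.2.dropLast), p.2.getLastD false))
    · intro q hq
      simp only [Finset.mem_coe, Finset.mem_product, Finset.mem_univ, and_true] at hq
      rw [mem_Pre] at hq
      apply mem_union_Pre
      rw [limg2_append, hq]
      rfl
    · intro p hp
      have hp' : limg2 f p.1.1 p.1.2 p.2 = u ++ [false] ∨ limg2 f p.1.1 p.1.2 p.2 = u ++ [true] := by
        rcases Finset.mem_union.mp hp with h | h <;> rw [mem_Pre] at h <;> [exact Or.inl h; exact Or.inr h]
      have hlen : p.2.length = u.length + 1 := by
        have := length_limg2 f p.1.1 p.1.2 p.2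
        rcases hp' with h | h <;> rw [h] at this <;> simpa using this.symm
      have hne : p.2 ≠ [] := by intro h; rw [h] at hlen; simp at hlen
      have hsplit : p.2.dropLast ++ [p.2.getLastD false] = p.2 := dropLast_getLastD hne
      simp only [Finset.mem_coe, Finset.mem_product, Finset.mem_univ, and_true]
      rw [mem_Pre]
      have key : limg2 f p.1.1 p.1.2 p.2.dropLast
            ++ [f (endPair p.1.1 p.1.2 p.2.dropLast).1 (endPair p.1.1 p.1.2 p.2.dropLast).2 (p.2.getLastD false)]
          = limg2 f p.1.1 p.1.2 p.2 := by
        conv_rhs => rw [← hsplit]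
        rw [limg2_append]
        rfl
      have hlen2 : (limg2 f p.1.1 p.1.2 p.2.dropLast).length = u.length := by
        rw [length_limg2, List.length_dropLast, hlen]; rfl
      rcases hp' with h | h <;>
        · rw [h] at key
          exact (List.append_inj key (by rw [hlen2])).1
    · intro q hq
      simp
    · intro p hp
      have hp' : limg2 f p.1.1 p.1.2 p.2 = u ++ [false] ∨ limg2 f p.1.1 p.1.2 p.2 = u ++ [true] := by
        rcases Finset.mem_union.mp hp with h | h <;> rw [mem_Pre] at h <;> [exact Or.inl h; exact Or.inr h]
      have hlen : p.2.length = u.length + 1 := by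
        have := length_limg2 f p.1.1 p.1.2 p.2
        rcases hp' with h | h <;> rw [h] at this <;> simpa using this.symm
      have hne : p.2 ≠ [] := by intro h; rw [h] at hlen; simp at hlen
      have hsplit : p.2.dropLast ++ [p.2.getLastD false] = p.2 := dropLast_getLastD hne
      obtain ⟨⟨a,b⟩, v⟩ := p
      simp only at hsplit
      simp only [List.getLastD_eq_getLast?] at hsplit
      simp [hsplit]
  rw [← hcard, ← hbij]
  simp only [Finset.card_product, Finset.card_univ, Fintype.card_bool, N]
  omega


lemma N_pos (hsurj : Function.Surjective (eca f)) (u : List Bool) : 1 ≤ N f u := by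
  classical
  set m := u.length with hm
  obtain ⟨y, hy⟩ := hsurj (fun i => if h : 0 ≤ i ∧ i < (m : ℤ) then u.getD i.toNat false else false)
  set a := y (-1) with ha
  set b := y 0 with hb
  set v : List Bool := List.ofFn (fun j : Fin m => y (1 + j)) with hv
  have hvlen : v.length = m := by simp [hv]
  have hw : ∀ k : ℕ, k ≤ m + 1 → (a :: b :: v).getD k false = y ((k : ℤ) - 1) := by
    intro k hk
    match k with
    | 0 => simp [ha]
    | 1 => simp [hb]
    | (k+2) =>
      have hk' : k < m := by omega
      simp only [List.getD_cons_succ]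
      rw [List.getD_eq_getElem _ _ (by omega : k < v.length)]
      simp only [hv, List.getElem_ofFn]
      congr 1
      push_cast
      ring
  have hvimg : limg2 f a b v = u := by
    apply ext_getD (by rw [length_limg2, hvlen])
    intro j hj
    have hj' : j < m := by rwa [length_limg2, hvlen] at hj
    rw [limg2_getD f a b v j (by omega)]
    rw [hw j (by omega), hw (j+1) (by omega), hw (j+2) (by omega)]
    have e1 : ((j+1 : ℕ) : ℤ) - 1 = (j : ℤ) := by push_cast; ring
    have e2 : ((j+2 : ℕ) : ℤ) - 1 = (j : ℤ) + 1 := by push_cast; ring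
    rw [e1, e2]
    have hyy := congrFun hy ((j : ℕ) : ℤ)
    have : eca f y (j : ℤ) = f (y ((j:ℤ) - 1)) (y (j:ℤ)) (y ((j:ℤ) + 1)) := rfl
    rw [this] at hyy
    rw [hyy]
    have hcond : (0 : ℤ) ≤ (j : ℤ) ∧ (j : ℤ) < (m : ℤ) := by
      constructor
      · positivity
      · exact_mod_cast hj'
    rw [dif_pos hcond]
    simp
  exact Finset.card_pos.mpr ⟨((a, b), v), (mem_Pre f).mpr hvimg⟩

def blockLists : ℕ → ℕ → Finset (List (List Bool))
  | 0, _ => {[]}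
  | k+1, W => (allWords W ×ˢ blockLists k W).image fun p => p.1 :: p.2

lemma mem_blockLists {k W : ℕ} {L : List (List Bool)} :
    L ∈ blockLists k W ↔ L.length = k ∧ ∀ b ∈ L, b.length = W := by
  induction k generalizing L with
  | zero =>
    simp only [blockLists, mem_singleton]
    constructor
    · rintro rfl; simp
    · rintro ⟨h1, _⟩; exact List.length_eq_zero_iff.mp h1
  | succ k ih =>
    simp only [blockLists, mem_image, mem_product]
    constructor
    · rintro ⟨⟨b, L'⟩, ⟨hb, hL'⟩, rfl⟩
      obtain ⟨h1, h2⟩ := ih.mp hL'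
      refine ⟨by simp [h1], ?_⟩
      intro c hc
      rcases List.mem_cons.mp hc with rfl | hc
      · exact mem_allWords.mp hb
      · exact h2 c hc
    · intro ⟨h1, h2⟩
      cases L with
      | nil => simp at h1
      | cons b L' =>
        refine ⟨⟨b, L'⟩, ⟨mem_allWords.mpr (h2 b (by simp)), ih.mpr ⟨by simpa using h1, ?_⟩⟩, rfl⟩
        exact fun c hc => h2 c (by simp [hc])

lemma card_blockLists (k W : ℕ) : (blockLists k W).card = (2^W)^k := by
  induction k with
  | zero => rfl
  | succ k ih =>
    rw [blockLists, Finset.card_image_of_injective _ (by rintro ⟨a,w⟩ ⟨a',w'⟩ h; simpa using h)]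
    simp [ih, card_allWords, pow_succ, mul_comm]

lemma flatten_length {W : ℕ} : ∀ {L : List (List Bool)},
    (∀ b ∈ L, b.length = W) → L.flatten.length = L.length * W := by
  intro L
  induction L with
  | nil => simp
  | cons b L' ih =>
    intro h2
    simp only [List.flatten_cons, List.length_append, List.length_cons]
    rw [ih (fun c hc => h2 c (by simp [hc])), h2 b (by simp)]
    ring

lemma flatten_mem_allWords {k W : ℕ} {L : List (List Bool)} (h : L ∈ blockLists k W) :
    L.flatten ∈ allWords (k * W) := by
  obtain ⟨h1, h2⟩ := mem_blockLists.mp h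
  rw [mem_allWords, flatten_length h2, h1]

def splitW : ℕ → ℕ → List Bool → List (List Bool)
  | 0, _, _ => []
  | k+1, W, v => v.take W :: splitW k W (v.drop W)

lemma splitW_mem {k W : ℕ} {v : List Bool} (h : v.length = k * W) :
    splitW k W v ∈ blockLists k W := by
  induction k generalizing v with
  | zero => simp [splitW, blockLists]
  | succ k ih =>
    have hlen : (v.drop W).length = k * W := by simp [Nat.succ_mul] at h ⊢; omega
    have hWle : W ≤ v.length := by simp [Nat.succ_mul] at h; omega
    rw [mem_blockLists]
    obtain ⟨h1, h2⟩ := mem_blockLists.mp (ih hlen)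
    refine ⟨by simp [splitW, h1], ?_⟩
    intro c hc
    rcases List.mem_cons.mp hc with rfl | hc
    · simp [List.length_take]; omega
    · exact h2 c hc

lemma flatten_splitW {k W : ℕ} {v : List Bool} (h : v.length = k * W) :
    (splitW k W v).flatten = v := by
  induction k generalizing v with
  | zero =>
    have : v = [] := by rw [← List.length_eq_zero_iff]; omega
    simp [splitW, this]
  | succ k ih =>
    have hlen : (v.drop W).length = k * W := by simp [Nat.succ_mul] at h ⊢; omega
    simp [splitW, ih hlen]

lemma splitW_flatten_aux {W : ℕ} : ∀ {L : List (List Bool)},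
    (∀ b ∈ L, b.length = W) → splitW L.length W L.flatten = L := by
  intro L
  induction L with
  | nil => intro _; simp [splitW]
  | cons b L' ih =>
    intro h2
    have hb : b.length = W := h2 b (by simp)
    simp only [List.flatten_cons, List.length_cons, splitW]
    rw [List.take_left' hb, List.drop_left' hb]
    rw [ih (fun c hc => h2 c (by simp [hc]))]

lemma splitW_flatten {k W : ℕ} {L : List (List Bool)} (h : L ∈ blockLists k W) :
    splitW k W L.flatten = L := by
  obtain ⟨h1, h2⟩ := mem_blockLists.mp h
  rw [← h1]
  exact splitW_flatten_aux h2

lemma sum_over_blocks {M : Type*} [AddCommMonoid M] (k W : ℕ) (g : List Bool → M) :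
    ∑ z ∈ allWords (k * W), g z = ∑ L ∈ blockLists k W, g L.flatten := by
  apply Finset.sum_nbij' (i := splitW k W) (j := List.flatten)
  · intro z hz
    exact splitW_mem (mem_allWords.mp hz)
  · intro L hL
    exact flatten_mem_allWords hL
  · intro z hz
    exact flatten_splitW (mem_allWords.mp hz)
  · intro L hL
    exact splitW_flatten hL
  · intro z hz
    rw [flatten_splitW (mem_allWords.mp hz)]

lemma card_avoid {W : ℕ} {p : List Bool} (hp : p.length = W) (k : ℕ) :
    ((blockLists k W).filter (fun L => p ∉ L)).card = (2^W - 1)^k := by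
  classical
  induction k with
  | zero =>
    rw [blockLists, Finset.filter_true_of_mem (by intro L hL; simp only [mem_singleton] at hL; simp [hL])]
    simp
  | succ k ih =>
    have hset : (blockLists (k+1) W).filter (fun L => p ∉ L)
        = (((allWords W).erase p) ×ˢ ((blockLists k W).filter (fun L => p ∉ L))).image
            fun q => q.1 :: q.2 := by
      ext L
      simp only [mem_filter, mem_image, mem_product, mem_erase, blockLists, mem_image, mem_product,
        mem_univ, true_and]
      constructor
      · rintro ⟨⟨⟨b, L'⟩, ⟨hb, hL'⟩, rfl⟩, hnp⟩
        simp only [List.mem_cons, not_or] at hnp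
        exact ⟨⟨b, L'⟩, ⟨⟨fun h => hnp.1 h.symm, hb⟩, hL', hnp.2⟩, rfl⟩
      · rintro ⟨⟨b, L'⟩, ⟨⟨hbp, hb⟩, hL', hnp⟩, rfl⟩
        refine ⟨⟨⟨b, L'⟩, ⟨hb, hL'⟩, rfl⟩, ?_⟩
        simp only [List.mem_cons, not_or]
        exact ⟨fun h => hbp h.symm, hnp⟩
    rw [hset, Finset.card_image_of_injective _ (by rintro ⟨a,w⟩ ⟨a',w'⟩ h; simpa using h)]
    rw [Finset.card_product, Finset.card_erase_of_mem (mem_allWords.mpr hp), card_allWords, ih]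
    ring

lemma arith_aux (m : ℕ) (hm : 1 ≤ m) : ∀ j : ℕ, m^j * (m + j + 1) ≤ (m+1)^(j+1) := by
  intro j
  induction j with
  | zero => simp
  | succ j ih =>
    have h1 : (m+1)^(j+2) = (m+1) * (m+1)^(j+1) := by ring
    calc m^(j+1) * (m + (j+1) + 1) = m * (m^j * (m + j + 1)) + m^(j+1) := by ring
    _ ≤ m * (m+1)^(j+1) + m^j * (m+j+1) := by
        have h2 : m^(j+1) ≤ m^j * (m+j+1) := by
          calc m^(j+1) = m^j * m := by ring
          _ ≤ m^j * (m+j+1) := Nat.mul_le_mul_left _ (by omega)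
        exact Nat.add_le_add (Nat.mul_le_mul_left _ ih) h2
    _ ≤ m * (m+1)^(j+1) + (m+1)^(j+1) := Nat.add_le_add_left ih _
    _ = (m+1)^(j+2) := by ring
lemma exists_good_k (C m : ℕ) (hm : 1 ≤ m) : ∃ k, 0 < k ∧ C * m^k < (m+1)^k := by
  refine ⟨C * m + 1, by omega, ?_⟩
  have h1 : C * m^(C*m+1) = m^(C*m) * (C * m) := by ring
  have h2 : m^(C*m) * (C*m) < m^(C*m) * (m + C*m + 1) :=
    Nat.mul_lt_mul_of_pos_left (by omega) (Nat.pow_pos hm)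
  rw [h1]
  exact lt_of_lt_of_le h2 (arith_aux m hm (C*m))


lemma no_diamond (hsurj : Function.Surjective (eca f)) {u : List Bool} {a b : Bool}
    {v v' : List Bool} (h1 : limg2 f a b v = u) (h2 : limg2 f a b v' = u)
    (hend : endPair a b v = endPair a b v') : v = v' := by
  classical
  by_contra hne
  have hlv : v.length = u.length := by rw [← h1, length_limg2]
  have hlv' : v'.length = u.length := by rw [← h2, length_limg2]
  set W := u.length + 2 with hW
  set p1 := a :: b :: v with hp1
  set p2 := a :: b :: v' with hp2
  have hp12 : p1 ≠ p2 := by simp [hp1, hp2, hne]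
  have hlp1 : p1.length = W := by simp [hp1, hW, hlv]
  have hlp2 : p2.length = W := by simp [hp2, hW, hlv']
  set repl : List Bool → List Bool := fun blk => if blk = p2 then p1 else blk with hrepl
  have key : ∀ s1 s2 blk, limg2 f s1 s2 (repl blk) = limg2 f s1 s2 blk ∧
      endPair s1 s2 (repl blk) = endPair s1 s2 blk := by
    intro s1 s2 blk
    by_cases hb : blk = p2
    · subst hb
      have e : repl p2 = p1 := by simp [hrepl]
      rw [e, hp1, hp2]
      constructor
      · simp only [limg2_cons]
        rw [h1, h2]
      · simp only [endPair_cons]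
        exact hend
    · simp [hrepl, hb]
  have mapflat : ∀ (L : List (List Bool)) (s1 s2 : Bool),
      limg2 f s1 s2 (L.map repl).flatten = limg2 f s1 s2 L.flatten ∧
      endPair s1 s2 (L.map repl).flatten = endPair s1 s2 L.flatten := by
    intro L
    induction L with
    | nil => intro s1 s2; simp
    | cons blk L' ih =>
      intro s1 s2
      simp only [List.map_cons, List.flatten_cons]
      rw [limg2_append, limg2_append, endPair_append, endPair_append]
      rw [(key s1 s2 blk).1, (key s1 s2 blk).2]
      rw [(ih (endPair s1 s2 blk).1 (endPair s1 s2 blk).2).1,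
          (ih (endPair s1 s2 blk).1 (endPair s1 s2 blk).2).2]
      exact ⟨rfl, rfl⟩
  have h2W : 1 ≤ 2 ^ W := Nat.one_le_two_pow
  obtain ⟨k, hk0, hklt⟩ := exists_good_k 4 (2 ^ W - 1) (by
    have : 4 ≤ 2 ^ W := by
      have : 2 ^ 2 ≤ 2 ^ W := Nat.pow_le_pow_right (by norm_num) (by omega)
      simpa using this
    omega)
  have hm1 : (2 ^ W - 1) + 1 = 2 ^ W := by omega
  rw [hm1] at hklt
  set D := (Finset.univ : Finset (Bool × Bool)) ×ˢ ((blockLists k W).filter (fun L => p2 ∉ L))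
    with hD
  have hsurjOn : Set.SurjOn
      (fun q : (Bool × Bool) × List (List Bool) => limg2 f q.1.1 q.1.2 q.2.flatten)
      ↑D ↑(allWords (k * W)) := by
    intro z hz
    simp only [Finset.coe_sort_coe, Finset.mem_coe] at hz
    have hzlen : z.length = k * W := mem_allWords.mp hz
    obtain ⟨⟨⟨a0, b0⟩, v0⟩, hp⟩ := Finset.card_pos.mp (N_pos f hsurj z)
    have himg : limg2 f a0 b0 v0 = z := (mem_Pre f).mp hp
    have hv0len : v0.length = k * W := by
      rw [← hzlen, ← himg, length_limg2]
    set L0 := splitW k W v0 with hL0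
    have hL0mem : L0 ∈ blockLists k W := splitW_mem hv0len
    refine ⟨((a0, b0), L0.map repl), ?_, ?_⟩
    · simp only [hD, Finset.coe_product, Set.mem_prod, Finset.mem_coe, Finset.mem_univ, true_and,
        Finset.mem_coe, Finset.mem_filter]
      constructor
      · rw [mem_blockLists]
        obtain ⟨hl1, hl2⟩ := mem_blockLists.mp hL0mem
        constructor
        · simp [hl1]
        · intro c hc
          obtain ⟨blk, hblk, rfl⟩ := List.mem_map.mp hc
          by_cases hbp : blk = p2
          · simp [hrepl, hbp, hlp1]
          · simp [hrepl, hbp, hl2 blk hblk]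
      · intro hmem
        obtain ⟨blk, _, hblk2⟩ := List.mem_map.mp hmem
        by_cases hbp : blk = p2
        · rw [hrepl] at hblk2; simp only [if_pos hbp] at hblk2; exact hp12 hblk2
        · rw [hrepl] at hblk2; simp only [if_neg hbp] at hblk2; exact hbp hblk2
    · show limg2 f a0 b0 (L0.map repl).flatten = z
      rw [(mapflat L0 a0 b0).1, flatten_splitW hv0len, himg]
  have hcard := Finset.card_le_card_of_surjOn _ hsurjOn
  rw [card_allWords] at hcard
  have hDcard : D.card = 4 * (2 ^ W - 1) ^ k := by
    rw [hD, Finset.card_product, card_avoid hlp2]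
    simp
  rw [hDcard] at hcard
  have hpow : 2 ^ (k * W) = (2 ^ W) ^ k := by rw [← pow_mul, mul_comm]
  rw [hpow] at hcard
  omega

lemma N_le_16 (hsurj : Function.Surjective (eca f)) (u : List Bool) : N f u ≤ 16 := by
  classical
  have hinj : Set.InjOn (fun p : (Bool × Bool) × List Bool =>
      (p.1, endPair p.1.1 p.1.2 p.2)) ↑(Pre f u) := by
    intro p hp q hq heq
    simp only [Finset.mem_coe] at hp hq
    have hp' := (mem_Pre f).mp hp
    have hq' := (mem_Pre f).mp hq
    simp only [Prod.mk.injEq] at heq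
    obtain ⟨h1, h2⟩ := heq
    rw [← h1] at hq' h2
    have := no_diamond f hsurj hp' hq' h2
    exact Prod.ext h1 this
  have := Finset.card_le_card_of_injOn _ (fun p _ => Finset.mem_univ _) hinj
  simpa [N] using this

lemma balance (hsurj : Function.Surjective (eca f)) (u : List Bool) : N f u = 4 := by
  classical
  set c := sInf (Set.range (N f)) with hc
  have hle : ∀ z, c ≤ N f z := fun z => Nat.sInf_le ⟨z, rfl⟩
  obtain ⟨w, hw⟩ : ∃ w, N f w = c := Nat.sInf_mem (Set.range_nonempty (N f))
  have hc4 : c ≤ 4 := by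
    have := hle []
    rwa [N_nil] at this
  have hceq : c = 4 := by
    by_contra hne4
    have hc3 : c ≤ 3 := by omega
    have hwne : w ≠ [] := by
      rintro rfl
      rw [N_nil] at hw
      omega
    set n := w.length with hn
    have hn1 : 1 ≤ n := List.length_pos_iff.mpr hwne
    have hstepL : ∀ z, N f z = c → ∀ t, N f (t :: z) = c := by
      intro z hz t
      have h2 := N_cons_sum f z
      have hf := hle (false :: z)
      have ht := hle (true :: z)
      rw [hz] at h2
      cases t <;> omega
    have hstepR : ∀ z, N f z = c → ∀ t, N f (z ++ [t]) = c := by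
      intro z hz t
      have h2 := N_concat_sum f z
      have hf := hle (z ++ [false])
      have ht := hle (z ++ [true])
      rw [hz] at h2
      cases t <;> omega
    have hprefix : ∀ su : List Bool, N f (su ++ w) = c := by
      intro su
      induction su with
      | nil => simpa using hw
      | cons t su' ih =>
        have := hstepL _ ih t
        simpa using this
    have hall : ∀ su sv : List Bool, N f (su ++ w ++ sv) = c := by
      intro su sv
      induction sv using List.reverseRecOn with
      | nil => simpa using hprefix su
      | append_singleton sv' t ih =>
        have := hstepR _ ih t
        rw [← List.append_assoc]
        exact this
    obtain ⟨k, hk0, hklt⟩ := exists_good_k 16 (2 ^ n - 1) (by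
      have : 2 ≤ 2 ^ n := by
        have : 2 ^ 1 ≤ 2 ^ n := Nat.pow_le_pow_right (by norm_num) hn1
        simpa using this
      omega)
    have hm1 : (2 ^ n - 1) + 1 = 2 ^ n := by
      have : 1 ≤ 2 ^ n := Nat.one_le_two_pow
      omega
    rw [hm1] at hklt
    have hsum := sum_N f (k * n)
    rw [sum_over_blocks k n (N f)] at hsum
    rw [← Finset.sum_filter_add_sum_filter_not (blockLists k n) (fun L => w ∈ L)
      (fun L => N f L.flatten)] at hsum
    have hpart1 : ∑ L ∈ (blockLists k n).filter (fun L => w ∈ L), N f L.flatten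
        ≤ c * (2 ^ n) ^ k := by
      calc ∑ L ∈ (blockLists k n).filter (fun L => w ∈ L), N f L.flatten
          = ∑ L ∈ (blockLists k n).filter (fun L => w ∈ L), c := by
            apply Finset.sum_congr rfl
            intro L hL
            obtain ⟨s, t, rfl⟩ := List.append_of_mem (Finset.mem_filter.mp hL).2
            rw [List.flatten_append, List.flatten_cons, ← List.append_assoc]
            exact hall _ _
        _ = ((blockLists k n).filter (fun L => w ∈ L)).card * c := by
            rw [Finset.sum_const, smul_eq_mul]
        _ ≤ (2 ^ n) ^ k * c := by
            apply Nat.mul_le_mul_right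
            calc ((blockLists k n).filter (fun L => w ∈ L)).card
                ≤ (blockLists k n).card := Finset.card_filter_le _ _
              _ = (2 ^ n) ^ k := card_blockLists k n
        _ = c * (2 ^ n) ^ k := by ring
    have hpart2 : ∑ L ∈ (blockLists k n).filter (fun L => ¬ w ∈ L), N f L.flatten
        ≤ 16 * (2 ^ n - 1) ^ k := by
      calc ∑ L ∈ (blockLists k n).filter (fun L => ¬ w ∈ L), N f L.flatten
          ≤ ∑ L ∈ (blockLists k n).filter (fun L => ¬ w ∈ L), 16 :=
            Finset.sum_le_sum fun L _ => N_le_16 f hsurj L.flatten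
        _ = ((blockLists k n).filter (fun L => ¬ w ∈ L)).card * 16 := by
            rw [Finset.sum_const, smul_eq_mul]
        _ = (2 ^ n - 1) ^ k * 16 := by
            congr 1
            exact card_avoid (show w.length = n by rw [hn]) k
        _ = 16 * (2 ^ n - 1) ^ k := by ring
    have hfour : 2 ^ (k * n + 2) = 4 * (2 ^ n) ^ k := by
      rw [pow_add, ← pow_mul, mul_comm k n]
      ring
    have hc' : c * (2 ^ n) ^ k ≤ 3 * (2 ^ n) ^ k := Nat.mul_le_mul_right _ hc3
    omega
  have hsum := sum_N f u.length
  have h4 : ∀ z ∈ allWords u.length, 4 ≤ N f z := fun z _ => hceq ▸ hle z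
  have hconst : ∑ _z ∈ allWords u.length, 4 = 2 ^ (u.length + 2) := by
    rw [Finset.sum_const, smul_eq_mul, card_allWords]
    ring
  have hfin := (Finset.sum_eq_sum_iff_of_le h4).mp (by rw [hconst, hsum])
  exact (hfin u (mem_allWords.mpr rfl)).symm


open MeasureTheory

def Cword (i : ℤ) (u : List Bool) : Set (ℤ → Bool) :=
  {x | ∀ j < u.length, x (i + (j : ℤ)) = u.getD j false}

lemma measurableSet_cset (s : Finset ℤ) (g : ℤ → Bool) :
    MeasurableSet {x : ℤ → Bool | ∀ i ∈ s, x i = g i} := by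
  have h : {x : ℤ → Bool | ∀ i ∈ s, x i = g i}
      = ⋂ i ∈ (s : Set ℤ), (fun x : ℤ → Bool => x i) ⁻¹' {g i} := by
    ext x; simp
  rw [h]
  exact MeasurableSet.biInter s.countable_toSet
    (fun i _ => measurable_pi_apply i (measurableSet_singleton _))

lemma Cword_eq_cset (i : ℤ) (u : List Bool) :
    Cword i u = {x : ℤ → Bool | ∀ k ∈ (Finset.range u.length).image (fun j : ℕ => i + (j:ℤ)),
      x k = u.getD (k - i).toNat false} := by
  ext x
  simp only [Set.mem_setOf_eq, Finset.mem_image, Finset.mem_range, Cword]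
  constructor
  · rintro h k ⟨j, hj, rfl⟩
    rw [show ((i + (j:ℤ)) - i).toNat = j by omega]
    exact h j hj
  · intro h j hj
    have := h (i + (j:ℤ)) ⟨j, hj, rfl⟩
    rwa [show ((i + (j:ℤ)) - i).toNat = j by omega] at this

lemma measurableSet_Cword (i : ℤ) (u : List Bool) : MeasurableSet (Cword i u) := by
  rw [Cword_eq_cset]; exact measurableSet_cset _ _

lemma ofReal_half : ENNReal.ofReal (1/2 : ℝ) = 2⁻¹ := by
  rw [show (1/2 : ℝ) = (2 : ℝ)⁻¹ by norm_num, ENNReal.ofReal_inv_of_pos (by norm_num)]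
  norm_num

variable {μ : Measure (ℤ → Bool)}

def IsBer (μ : Measure (ℤ → Bool)) : Prop :=
  ∀ (s : Finset ℤ) (g : ℤ → Bool),
    μ {x | ∀ i ∈ s, x i = g i} =
      ∏ i ∈ s, (if g i then ENNReal.ofReal (1/2 : ℝ) else ENNReal.ofReal (1 - 1/2 : ℝ))

lemma bernoulli_cset (hber : IsBer μ) (s : Finset ℤ) (g : ℤ → Bool) :
    μ {x | ∀ i ∈ s, x i = g i} = 2⁻¹ ^ s.card := by
  rw [hber s g]
  rw [Finset.prod_congr rfl (fun i _ => by
    rw [show (1 : ℝ) - 1/2 = 1/2 by norm_num, ite_self, ofReal_half])]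
  rw [Finset.prod_const]

lemma measure_Cword (hber : IsBer μ) (i : ℤ) (u : List Bool) :
    μ (Cword i u) = 2⁻¹ ^ u.length := by
  rw [Cword_eq_cset, bernoulli_cset hber]
  congr 1
  rw [Finset.card_image_of_injOn (fun a _ b _ h => by omega), Finset.card_range]

lemma preimage_Cword (i : ℤ) (u : List Bool) :
    eca f ⁻¹' (Cword i u) = ⋃ p ∈ Pre f u, Cword (i - 1) (p.1.1 :: p.1.2 :: p.2) := by
  ext x
  simp only [Set.mem_preimage, Set.mem_iUnion, exists_prop]
  constructor
  · intro hx
    set m := u.length with hm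
    set a := x (i-1) with ha
    set b := x i with hb
    set v : List Bool := List.ofFn (fun j : Fin m => x (i + 1 + (j:ℤ))) with hv
    have hvlen : v.length = m := by simp [hv]
    have hwindow : ∀ k : ℕ, k ≤ m + 1 → (a :: b :: v).getD k false = x (i - 1 + (k:ℤ)) := by
      intro k hk
      match k with
      | 0 => simp [ha]
      | 1 =>
        simp only [List.getD_cons_succ, List.getD_cons_zero, hb]
        congr 1
        omega
      | (k+2) =>
        have hk' : k < m := by omega
        simp only [List.getD_cons_succ]
        rw [List.getD_eq_getElem _ _ (by omega : k < v.length)]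
        simp only [hv, List.getElem_ofFn]
        congr 1
        push_cast
        ring
    have himg : limg2 f a b v = u := by
      apply ext_getD (by rw [length_limg2, hvlen])
      intro j hj
      have hj' : j < m := by rwa [length_limg2, hvlen] at hj
      rw [limg2_getD f a b v j (by omega)]
      rw [hwindow j (by omega), hwindow (j+1) (by omega), hwindow (j+2) (by omega)]
      have e0 : i - 1 + (j:ℤ) = (i + (j:ℤ)) - 1 := by ring
      have e1 : i - 1 + ((j+1 : ℕ):ℤ) = i + (j:ℤ) := by push_cast; ring
      have e2 : i - 1 + ((j+2 : ℕ):ℤ) = (i + (j:ℤ)) + 1 := by push_cast; ring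
      rw [e0, e1, e2]
      exact hx j hj'
    refine ⟨((a, b), v), (mem_Pre f).mpr himg, ?_⟩
    intro k hk
    have hk' : k ≤ m + 1 := by
      simp only [List.length_cons, hvlen] at hk
      omega
    exact (hwindow k hk').symm
  · rintro ⟨⟨⟨a, b⟩, v⟩, hp, hxc⟩
    have himg : limg2 f a b v = u := (mem_Pre f).mp hp
    have hvlen : v.length = u.length := by rw [← himg, length_limg2]
    intro j hj
    have hwin : ∀ k : ℕ, k < u.length + 2 → x (i - 1 + (k:ℤ)) = (a :: b :: v).getD k false := by
      intro k hk
      apply hxc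
      simp [hvlen]
      omega
    have e0 : (i + (j:ℤ)) - 1 = i - 1 + (j:ℤ) := by ring
    have e1 : i + (j:ℤ) = i - 1 + ((j+1 : ℕ):ℤ) := by push_cast; ring
    have e2 : (i + (j:ℤ)) + 1 = i - 1 + ((j+2 : ℕ):ℤ) := by push_cast; ring
    show f (x ((i + (j:ℤ)) - 1)) (x (i + (j:ℤ))) (x ((i + (j:ℤ)) + 1)) = u.getD j false
    rw [e0, e2, e1, hwin j (by omega), hwin (j+1) (by omega), hwin (j+2) (by omega)]
    rw [← limg2_getD f a b v j (by omega), himg]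

lemma pairwise_disjoint_Cword (i : ℤ) (u : List Bool) :
    (↑(Pre f u) : Set ((Bool × Bool) × List Bool)).PairwiseDisjoint
      (fun p => Cword (i - 1) (p.1.1 :: p.1.2 :: p.2)) := by
  intro p hp q hq hne
  simp only [Finset.mem_coe] at hp hq
  have hlp : p.2.length = u.length := by
    rw [← (mem_Pre f).mp hp, length_limg2]
  have hlq : q.2.length = u.length := by
    rw [← (mem_Pre f).mp hq, length_limg2]
  apply Set.disjoint_left.mpr
  intro x hxp hxq
  apply hne
  have hw : p.1.1 :: p.1.2 :: p.2 = q.1.1 :: q.1.2 :: q.2 := by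
    apply ext_getD (by simp [hlp, hlq])
    intro k hk
    rw [← hxp k hk, ← hxq k (by simp only [List.length_cons, hlq]; simp only [List.length_cons, hlp] at hk; omega)]
  obtain ⟨h1, h2, h3⟩ : p.1.1 = q.1.1 ∧ p.1.2 = q.1.2 ∧ p.2 = q.2 := by
    simpa using hw
  exact Prod.ext (Prod.ext h1 h2) h3

lemma measure_preimage_Cword (hsurj : Function.Surjective (eca f)) (hber : IsBer μ)
    (i : ℤ) (u : List Bool) :
    μ (eca f ⁻¹' Cword i u) = 2⁻¹ ^ u.length := by
  rw [preimage_Cword]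
  rw [measure_biUnion_finset (pairwise_disjoint_Cword f i u)
    (fun p _ => measurableSet_Cword _ _)]
  have hval : ∀ p ∈ Pre f u, μ (Cword (i - 1) (p.1.1 :: p.1.2 :: p.2))
      = 2⁻¹ ^ (u.length + 2) := by
    intro p hp
    rw [measure_Cword hber]
    congr 1
    simp only [List.length_cons]
    rw [show p.2.length = u.length by rw [← (mem_Pre f).mp hp, length_limg2]]
  rw [Finset.sum_congr rfl hval, Finset.sum_const]
  have hN : (Pre f u).card = 4 := balance f hsurj u
  rw [hN]
  have h2 : (2 : ENNReal) * 2⁻¹ = 1 := ENNReal.mul_inv_cancel two_ne_zero ENNReal.ofNat_ne_top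
  calc (4 : ℕ) • ((2:ENNReal)⁻¹ ^ (u.length + 2)) = 4 * (2⁻¹ ^ u.length * (2⁻¹ * 2⁻¹)) := by
        rw [nsmul_eq_mul, pow_add]
        norm_num [pow_succ]
    _ = (2 * 2⁻¹) * (2 * 2⁻¹) * 2⁻¹ ^ u.length := by ring
    _ = 2⁻¹ ^ u.length := by rw [h2]; ring

def CSet : Set (Set (ℤ → Bool)) :=
  {S | ∃ (s : Finset ℤ) (g : ℤ → Bool), S = {x | ∀ i ∈ s, x i = g i}}

lemma isPiSystem_CSet : IsPiSystem CSet := by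
  rintro S ⟨s, g, rfl⟩ T ⟨t, h, rfl⟩ hne
  obtain ⟨x₀, hx₀s, hx₀t⟩ := hne
  refine ⟨s ∪ t, fun i => if i ∈ s then g i else h i, ?_⟩
  ext y
  simp only [Set.mem_inter_iff, Set.mem_setOf_eq, Finset.mem_union]
  constructor
  · rintro ⟨h1, h2⟩ i hi
    by_cases his : i ∈ s
    · rw [if_pos his]; exact h1 i his
    · rw [if_neg his]; exact h2 i (hi.resolve_left his)
  · intro hy
    constructor
    · intro i hi
      have := hy i (Or.inl hi)
      rwa [if_pos hi] at this
    · intro i hi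
      by_cases his : i ∈ s
      · have := hy i (Or.inl his)
        rw [if_pos his] at this
        rw [this, ← hx₀s i his, hx₀t i hi]
      · have := hy i (Or.inr hi)
        rwa [if_neg his] at this

lemma generateFrom_CSet :
    (MeasurableSpace.pi : MeasurableSpace (ℤ → Bool)) = MeasurableSpace.generateFrom CSet := by
  apply le_antisymm
  · have hpi : (MeasurableSpace.pi : MeasurableSpace (ℤ → Bool))
        = ⨆ i : ℤ, MeasurableSpace.comap (fun x => x i) inferInstance := rfl
    rw [hpi]
    apply iSup_le
    intro i S hS
    obtain ⟨S', _, rfl⟩ := hS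
    have h : (fun x : ℤ → Bool => x i) ⁻¹' S'
        = ⋃ b ∈ S', {x : ℤ → Bool | ∀ k ∈ ({i} : Finset ℤ), x k = Function.const ℤ b k} := by
      ext x
      simp only [Set.mem_preimage, Set.mem_iUnion, Set.mem_setOf_eq, Finset.mem_singleton,
        exists_prop, Function.const]
      constructor
      · intro hx; exact ⟨x i, hx, fun k hk => by rw [hk]⟩
      · rintro ⟨b, hb, hx⟩
        rw [hx i rfl]; exact hb
    rw [h]
    apply MeasurableSet.biUnion (Set.to_countable _)
    intro b _
    exact MeasurableSpace.measurableSet_generateFrom ⟨{i}, Function.const ℤ b, rfl⟩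
  · apply MeasurableSpace.generateFrom_le
    rintro S ⟨s, g, rfl⟩
    exact measurableSet_cset s g

lemma measurable_eca : Measurable (eca f) := by
  apply measurable_pi_lambda
  intro i
  have h1 : Measurable fun x : ℤ → Bool => ((x (i-1), x i), x (i+1)) :=
    ((measurable_pi_apply _).prodMk (measurable_pi_apply _)).prodMk (measurable_pi_apply _)
  exact (measurable_of_countable (fun q : (Bool × Bool) × Bool => f q.1.1 q.1.2 q.2)).comp h1

lemma map_agree (hsurj : Function.Surjective (eca f)) (hber : IsBer μ) :
    ∀ S ∈ CSet, μ.map (eca f) S = μ S := by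
  rintro S ⟨s, g, rfl⟩
  rw [Measure.map_apply (measurable_eca f) (measurableSet_cset s g)]
  rcases s.eq_empty_or_nonempty with rfl | hs
  · have h : {x : ℤ → Bool | ∀ i ∈ (∅ : Finset ℤ), x i = g i} = Set.univ := by
      ext x; simp
    rw [h]
    simp
  · set i₀ := s.min' hs with hi₀
    set L := (s.max' hs - i₀ + 1).toNat with hL
    set compat := (allWords L).filter
      (fun u => ∀ i ∈ s, u.getD (i - i₀).toNat false = g i) with hcompat
    have hdecomp : {x : ℤ → Bool | ∀ i ∈ s, x i = g i} = ⋃ u ∈ compat, Cword i₀ u := by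
      ext x
      simp only [Set.mem_setOf_eq, Set.mem_iUnion, exists_prop]
      constructor
      · intro hx
        refine ⟨List.ofFn (fun j : Fin L => x (i₀ + (j:ℤ))), ?_, ?_⟩
        · rw [hcompat, Finset.mem_filter]
          refine ⟨mem_allWords.mpr (by simp), ?_⟩
          intro i hi
          have h1 : i₀ ≤ i := s.min'_le i hi
          have h2 : i ≤ s.max' hs := s.le_max' i hi
          have hlt : (i - i₀).toNat < L := by omega
          rw [List.getD_eq_getElem _ _ (by simpa using hlt)]
          simp only [List.getElem_ofFn]
          rw [show i₀ + (((i - i₀).toNat : ℕ) : ℤ) = i by omega]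
          exact hx i hi
        · intro j hj
          simp only [List.length_ofFn] at hj
          rw [List.getD_eq_getElem _ _ (by simpa using hj)]
          simp [List.getElem_ofFn]
      · rintro ⟨u, hu, hxu⟩ i hi
        rw [hcompat, Finset.mem_filter] at hu
        have hlen : u.length = L := mem_allWords.mp hu.1
        have h1 : i₀ ≤ i := s.min'_le i hi
        have h2 : i ≤ s.max' hs := s.le_max' i hi
        have hlt : (i - i₀).toNat < u.length := by omega
        have hx := hxu (i - i₀).toNat hlt
        rw [show i₀ + (((i - i₀).toNat : ℕ) : ℤ) = i by omega] at hx
        rw [hx]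
        exact hu.2 i hi
    have hpd : (↑compat : Set (List Bool)).PairwiseDisjoint (fun u => Cword i₀ u) := by
      intro u hu u' hu' hne
      simp only [Finset.mem_coe, hcompat, Finset.mem_filter] at hu hu'
      apply Set.disjoint_left.mpr
      intro x hxu hxu'
      apply hne
      apply ext_getD ((mem_allWords.mp hu.1).trans (mem_allWords.mp hu'.1).symm)
      intro j hj
      rw [← hxu j hj, ← hxu' j (by rw [mem_allWords.mp hu'.1, ← mem_allWords.mp hu.1]; exact hj)]
    rw [hdecomp, Set.preimage_iUnion₂]
    have hpd' : (↑compat : Set (List Bool)).PairwiseDisjoint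
        (fun u => eca f ⁻¹' Cword i₀ u) := by
      intro u hu u' hu' hne
      exact Set.disjoint_left.mpr fun x hx hx' =>
        Set.disjoint_left.mp (hpd hu hu' hne) hx hx'
    rw [measure_biUnion_finset hpd'
      (fun u _ => (measurableSet_Cword i₀ u).preimage (measurable_eca f))]
    rw [measure_biUnion_finset hpd (fun u _ => measurableSet_Cword i₀ u)]
    apply Finset.sum_congr rfl
    intro u hu
    rw [measure_preimage_Cword f hsurj hber, measure_Cword hber]

end EcaCore



/-- an ECA with surjective global map preserves the symmetric Bernoulli
measure `μ_{1/2}`; consequently `P_n(b) = 2^{-|b|}` for every word `b` and every `n`. -/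
theorem surjective_eca_preserves_symmetric_bernoulli
    (f : Bool → Bool → Bool → Bool) (hsurj : Function.Surjective (eca f))
    (μ : Measure (ℤ → Bool)) (hprob : IsProbabilityMeasure μ)
    (hber : IsBernoulli (1 / 2) μ) :
    μ.map (eca f) = μ ∧
      ∀ (n : ℕ) (b : List Bool),
        μ ((eca f)^[n] ⁻¹' cylinder b) = (2 : ENNReal)⁻¹ ^ b.length := by
  classical
  have hber' : EcaCore.IsBer μ := hber
  haveI : IsProbabilityMeasure (μ.map (eca f)) :=
    Measure.isProbabilityMeasure_map (EcaCore.measurable_eca f).aemeasurable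
  have hmap : μ.map (eca f) = μ :=
    MeasureTheory.ext_of_generate_finite EcaCore.CSet EcaCore.generateFrom_CSet
      EcaCore.isPiSystem_CSet (EcaCore.map_agree f hsurj hber') (by simp)
  refine ⟨hmap, ?_⟩
  intro n b
  have hcyl : _root_.cylinder b = EcaCore.Cword 0 b := by
    ext x
    simp only [_root_.cylinder, EcaCore.Cword, Set.mem_setOf_eq]
    constructor
    · intro h j hj
      have := h ⟨j, hj⟩
      rw [List.getD_eq_getElem _ _ hj]
      simpa using this
    · intro h j
      have h2 := h j.1 j.2
      rw [List.getD_eq_getElem _ _ j.2] at h2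
      simpa [List.get_eq_getElem] using h2
  induction n with
  | zero =>
    simp only [Function.iterate_zero, Set.preimage_id']
    rw [hcyl]
    exact EcaCore.measure_Cword hber' 0 b
  | succ n ih =>
    rw [Function.iterate_succ, Set.preimage_comp]
    have hmeas : MeasurableSet ((eca f)^[n] ⁻¹' _root_.cylinder b) := by
      rw [hcyl]
      exact (EcaCore.measurableSet_Cword 0 b).preimage ((EcaCore.measurable_eca f).iterate n)
    rw [← Measure.map_apply (EcaCore.measurable_eca f) hmeas, hmap]
    exact ih
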